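/- Let 0 < α < 1, β = 1 − α, let t be real, s = α + it, let ε > 0, and let 1 < w < v be reals such that |θ(u) − u| ≤ ε·u for all u ∈ [w,v]. Then |F_s(v,w)| ≤ ε·( v^β + w^β + |s|·( v^β − w^β )/β ). -/

import Mathlib

/-- Chebyshev's function `θ(x) = ∑_{p ≤ x, p prime} log p`. -/
noncomputable def theta (x : ℝ) : ℝ :=
  ∑ p ∈ (Finset.range (⌊x⌋₊ + 1)).filter Nat.Prime, Real.log p

/-- `F_s(v,w) = ∑_{w < p ≤ v, p prime} (log p)/p^s − (v^{1−s} − w^{1−s})/(1−s)`. -/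
noncomputable def Fs (s : ℂ) (v w : ℝ) : ℂ :=
  (∑ p ∈ (Finset.range (⌊v⌋₊ + 1)).filter (fun p : ℕ => Nat.Prime p ∧ w < (p : ℝ)),
      (Real.log p : ℂ) / (p : ℂ) ^ s) -
    ((v : ℂ) ^ (1 - s) - (w : ℂ) ^ (1 - s)) / (1 - s)

open MeasureTheory

theorem stmt_10 (α β t w v ε : ℝ) (hα0 : 0 < α) (hα1 : α < 1) (hβ : β = 1 - α)
    (hε : 0 < ε) (hw : 1 < w) (hwv : w < v)
    (hθ : ∀ u ∈ Set.Icc w v, |theta u - u| ≤ ε * u) :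
    ‖Fs ((α : ℂ) + (t : ℂ) * Complex.I) v w‖
      ≤ ε * (v ^ β + w ^ β +
          ‖(α : ℂ) + (t : ℂ) * Complex.I‖ * (v ^ β - w ^ β) / β) := by
  set s : ℂ := (α : ℂ) + (t : ℂ) * Complex.I with hs_def
  have hsre : s.re = α := by simp [hs_def]
  have hw0 : (0:ℝ) < w := lt_trans one_pos hw
  have hv0 : (0:ℝ) < v := lt_trans hw0 hwv
  have hs0 : s ≠ 0 := by
    intro h; rw [h] at hsre; simp at hsre; linarith
  have h1s : (1:ℂ) - s ≠ 0 := by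
    intro h
    have : ((1:ℂ) - s).re = 0 := by rw [h]; simp
    rw [Complex.sub_re, Complex.one_re, hsre] at this; linarith
  set f : ℝ → ℂ := fun u => (u : ℂ) ^ (-s) with hf_def
  set c : ℕ → ℂ := fun n => if n.Prime then (Real.log n : ℂ) else 0 with hc_def
  -- theta as partial sums of c
  have hicc : ∀ n : ℕ, Finset.Icc 0 n = Finset.range (n + 1) := by
    intro n; ext k; simp [Nat.lt_succ_iff]
  have hθsum : ∀ x : ℝ, (∑ k ∈ Finset.Icc 0 ⌊x⌋₊, c k) = ((theta x : ℝ) : ℂ) := by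
    intro x
    rw [hicc, theta, Complex.ofReal_sum, Finset.sum_filter]
  -- derivative of f
  have hderiv : ∀ x : ℝ, 0 < x → HasDerivAt f (-s * (x:ℂ) ^ (-s - 1)) x := by
    intro x hx
    have hr : (-s - 1 : ℂ) ≠ -1 := by
      intro h; apply hs0; linear_combination -h
    have h0 := hasDerivAt_ofReal_cpow_const' hx.ne' hr
    have h1 := h0.const_mul (-s)
    have hfe : f = fun y : ℝ => -s * ((y : ℂ) ^ (-s - 1 + 1) / (-s - 1 + 1)) := by
      funext y
      rw [show (-s - 1 + 1 : ℂ) = -s by ring, hf_def]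
      field_simp
    rw [hfe]
    exact h1
  have hf_diff : ∀ u ∈ Set.Icc w v, DifferentiableAt ℝ f u :=
    fun u hu => (hderiv u (hw0.trans_le hu.1)).differentiableAt
  have hderiv_eq : ∀ x : ℝ, 0 < x → deriv f x = -s * (x:ℂ) ^ (-s - 1) :=
    fun x hx => (hderiv x hx).deriv
  -- norm of deriv f
  have hres1 : (-s - 1 : ℂ).re = -α - 1 := by
    simp [Complex.sub_re, Complex.neg_re, hsre]
  have hress : (-s : ℂ).re = -α := by simp [Complex.neg_re, hsre]
  have hnd : ∀ x : ℝ, 0 < x → ‖deriv f x‖ = ‖s‖ * x ^ (-α - 1) := by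
    intro x hx
    rw [hderiv_eq x hx, norm_mul, norm_neg,
      Complex.norm_cpow_eq_rpow_re_of_pos hx, hres1]
  -- theta is monotone hence measurable
  have htheta_mono : Monotone theta := by
    intro x y hxy
    unfold theta
    refine Finset.sum_le_sum_of_subset_of_nonneg
      (Finset.filter_subset_filter _ (Finset.range_subset_range.mpr (by
        have := Nat.floor_le_floor hxy; omega))) ?_
    intro p hp _
    have hp2 : 2 ≤ p := (Nat.prime_def_lt.mp (Finset.mem_filter.mp hp).2).1
    refine Real.log_nonneg ?_
    exact_mod_cast Nat.one_le_iff_ne_zero.mpr (by omega)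
  have htheta_meas : Measurable theta := htheta_mono.measurable
  -- the integrand G
  set G : ℝ → ℂ := fun u => deriv f u * (((theta u : ℝ) : ℂ) - (u : ℝ)) with hG_def
  have measG : Measurable G :=
    (measurable_deriv f).mul
      ((Complex.measurable_ofReal.comp htheta_meas).sub Complex.measurable_ofReal)
  have hθabs : ∀ u : ℝ, ‖((theta u : ℝ) : ℂ) - (u : ℝ)‖ = |theta u - u| := by
    intro u
    rw [← Complex.ofReal_sub, Complex.norm_real, Real.norm_eq_abs]
  have hGle : ∀ u ∈ Set.Ioc w v, ‖G u‖ ≤ ‖s‖ * ε * u ^ (-α) := by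
    intro u hu
    have hu0 : 0 < u := hw0.trans hu.1
    rw [hG_def]
    simp only [norm_mul]
    rw [hnd u hu0, hθabs u]
    have h1 : |theta u - u| ≤ ε * u := hθ u ⟨hu.1.le, hu.2⟩
    calc ‖s‖ * u ^ (-α - 1) * |theta u - u|
        ≤ ‖s‖ * u ^ (-α - 1) * (ε * u) := by
          refine mul_le_mul_of_nonneg_left h1 ?_
          positivity
      _ = ‖s‖ * ε * (u ^ (-α - 1) * u) := by ring
      _ = ‖s‖ * ε * u ^ (-α) := by
          rw [show u ^ (-α - 1) * u = u ^ (-α) by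
            rw [← Real.rpow_add_one hu0.ne' (-α - 1)]; ring_nf]
  -- integrability facts
  have hIoc_fin : volume (Set.Ioc w v) ≠ ⊤ := measure_Ioc_lt_top.ne
  have intG : IntegrableOn G (Set.Ioc w v) := by
    refine Measure.integrableOn_of_bounded (M := ‖s‖ * ε * w ^ (-α)) hIoc_fin
      measG.aestronglyMeasurable ?_
    rw [ae_restrict_iff' measurableSet_Ioc]
    filter_upwards with u hu
    refine (hGle u hu).trans ?_
    have : u ^ (-α) ≤ w ^ (-α) :=
      Real.rpow_le_rpow_of_nonpos hw0 hu.1.le (by linarith)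
    refine mul_le_mul_of_nonneg_left this ?_
    positivity
  have intD : IntegrableOn (fun u : ℝ => deriv f u * (u : ℝ)) (Set.Ioc w v) := by
    refine Measure.integrableOn_of_bounded (M := ‖s‖ * w ^ (-α)) hIoc_fin
      ((measurable_deriv f).mul Complex.measurable_ofReal).aestronglyMeasurable ?_
    rw [ae_restrict_iff' measurableSet_Ioc]
    filter_upwards with u hu
    have hu0 : 0 < u := hw0.trans hu.1
    rw [norm_mul, hnd u hu0, Complex.norm_real, Real.norm_eq_abs,
      abs_of_pos hu0]
    calc ‖s‖ * u ^ (-α - 1) * u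
        = ‖s‖ * u ^ (-α) := by
          rw [mul_assoc, show u ^ (-α - 1) * u = u ^ (-α) by
            rw [← Real.rpow_add_one hu0.ne' (-α - 1)]; ring_nf]
      _ ≤ ‖s‖ * w ^ (-α) := by
          refine mul_le_mul_of_nonneg_left
            (Real.rpow_le_rpow_of_nonpos hw0 hu.1.le (by linarith)) ?_
          positivity
  have hf_int : IntegrableOn (deriv f) (Set.Icc w v) := by
    refine Measure.integrableOn_of_bounded (M := ‖s‖ * w ^ (-α - 1))
      measure_Icc_lt_top.ne (measurable_deriv f).aestronglyMeasurable ?_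
    rw [ae_restrict_iff' measurableSet_Icc]
    filter_upwards with u hu
    rw [hnd u (hw0.trans_le hu.1)]
    refine mul_le_mul_of_nonneg_left
      (Real.rpow_le_rpow_of_nonpos hw0 hu.1 (by linarith)) ?_
    positivity
  -- Abel summation
  have habel := sum_mul_eq_sub_sub_integral_mul c hw0.le hwv.le hf_diff hf_int
  -- identify the sum
  have hsum_eq : (∑ p ∈ (Finset.range (⌊v⌋₊ + 1)).filter
        (fun p : ℕ => Nat.Prime p ∧ w < (p : ℝ)), (Real.log p : ℂ) / (p : ℂ) ^ s)
      = ∑ k ∈ Finset.Ioc ⌊w⌋₊ ⌊v⌋₊, f k * c k := by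
    have hsets : (Finset.range (⌊v⌋₊ + 1)).filter (fun p : ℕ => Nat.Prime p ∧ w < (p : ℝ))
        = (Finset.Ioc ⌊w⌋₊ ⌊v⌋₊).filter Nat.Prime := by
      ext p
      simp only [Finset.mem_filter, Finset.mem_range, Finset.mem_Ioc, Nat.lt_succ_iff]
      rw [Nat.floor_lt hw0.le]
      tauto
    rw [hsets, Finset.sum_filter]
    refine Finset.sum_congr rfl fun k _ => ?_
    by_cases h : k.Prime
    · simp only [hc_def, h, if_true, hf_def]
      rw [Complex.cpow_neg, div_eq_mul_inv, mul_comm]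
      norm_cast
    · simp [hc_def, h]
  -- integral congruences
  have hI1 : (∫ u in Set.Ioc w v, deriv f u * (∑ k ∈ Finset.Icc 0 ⌊u⌋₊, c k))
      = (∫ u in Set.Ioc w v, deriv f u * ((theta u : ℝ) : ℂ)) :=
    setIntegral_congr_fun measurableSet_Ioc (fun u _ => by rw [hθsum])
  have hI2 : (∫ u in Set.Ioc w v, deriv f u * ((theta u : ℝ) : ℂ))
      = (∫ u in Set.Ioc w v, G u) + ∫ u in Set.Ioc w v, deriv f u * (u : ℝ) := by
    rw [← integral_add intG intD]
    refine setIntegral_congr_fun measurableSet_Ioc fun u _ => ?_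
    rw [hG_def]; ring
  have hM : (∫ u in Set.Ioc w v, (u : ℂ) ^ (-s))
      = ((v : ℂ) ^ (1 - s) - (w : ℂ) ^ (1 - s)) / (1 - s) := by
    rw [← intervalIntegral.integral_of_le hwv.le,
      integral_cpow (Or.inl (by rw [hress]; linarith))]
    rw [neg_add_eq_sub]
  have hI3 : (∫ u in Set.Ioc w v, deriv f u * (u : ℝ))
      = -s * (((v : ℂ) ^ (1 - s) - (w : ℂ) ^ (1 - s)) / (1 - s)) := by
    rw [← hM, ← integral_const_mul]
    refine setIntegral_congr_fun measurableSet_Ioc fun u hu => ?_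
    have hu0 : 0 < u := hw0.trans hu.1
    have hu0' : (u : ℂ) ≠ 0 := by exact_mod_cast hu0.ne'
    rw [hderiv_eq u hu0, mul_assoc]
    congr 1
    calc (u : ℂ) ^ (-s - 1) * (u : ℝ) = (u : ℂ) ^ (-s - 1) * (u : ℂ) ^ (1 : ℂ) := by
          rw [Complex.cpow_one]
      _ = (u : ℂ) ^ (-s - 1 + 1) := (Complex.cpow_add _ _ hu0').symm
      _ = (u : ℂ) ^ (-s) := by ring_nf
  -- cpow shifts
  have hMv : f v * (v : ℝ) = (v : ℂ) ^ ((1:ℂ) - s) := by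
    have hv0' : (v : ℂ) ≠ 0 := by exact_mod_cast hv0.ne'
    rw [hf_def]
    calc (v : ℂ) ^ (-s) * (v : ℝ) = (v : ℂ) ^ (-s) * (v : ℂ) ^ (1 : ℂ) := by
          rw [Complex.cpow_one]
      _ = (v : ℂ) ^ (-s + 1) := (Complex.cpow_add _ _ hv0').symm
      _ = (v : ℂ) ^ ((1:ℂ) - s) := by ring_nf
  have hMw : f w * (w : ℝ) = (w : ℂ) ^ ((1:ℂ) - s) := by
    have hw0' : (w : ℂ) ≠ 0 := by exact_mod_cast hw0.ne'
    rw [hf_def]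
    calc (w : ℂ) ^ (-s) * (w : ℝ) = (w : ℂ) ^ (-s) * (w : ℂ) ^ (1 : ℂ) := by
          rw [Complex.cpow_one]
      _ = (w : ℂ) ^ (-s + 1) := (Complex.cpow_add _ _ hw0').symm
      _ = (w : ℂ) ^ ((1:ℂ) - s) := by ring_nf
  -- the key identity
  have key : Fs s v w = f v * (((theta v : ℝ) : ℂ) - (v : ℝ))
      - f w * (((theta w : ℝ) : ℂ) - (w : ℝ)) - ∫ u in Set.Ioc w v, G u := by
    rw [Fs, hsum_eq, habel, hI1, hI2, hI3, hθsum v, hθsum w]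
    rw [mul_sub, mul_sub, hMv, hMw]
    field_simp
    ring
  rw [key]
  -- bounds for the three terms
  have hnf : ∀ x : ℝ, 0 < x → ‖f x‖ = x ^ (-α) := by
    intro x hx
    rw [hf_def, Complex.norm_cpow_eq_rpow_re_of_pos hx, hress]
  have hshift : ∀ x : ℝ, 0 < x → x ^ (-α) * x = x ^ β := by
    intro x hx
    rw [← Real.rpow_add_one hx.ne' (-α), hβ]; ring_nf
  have hA : ‖f v * (((theta v : ℝ) : ℂ) - (v : ℝ))‖ ≤ ε * v ^ β := by
    rw [norm_mul, hnf v hv0, hθabs]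
    calc v ^ (-α) * |theta v - v| ≤ v ^ (-α) * (ε * v) := by
          refine mul_le_mul_of_nonneg_left (hθ v ⟨hwv.le, le_refl v⟩) ?_
          positivity
      _ = ε * (v ^ (-α) * v) := by ring
      _ = ε * v ^ β := by rw [hshift v hv0]
  have hB : ‖f w * (((theta w : ℝ) : ℂ) - (w : ℝ))‖ ≤ ε * w ^ β := by
    rw [norm_mul, hnf w hw0, hθabs]
    calc w ^ (-α) * |theta w - w| ≤ w ^ (-α) * (ε * w) := by
          refine mul_le_mul_of_nonneg_left (hθ w ⟨le_refl w, hwv.le⟩) ?_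
          positivity
      _ = ε * (w ^ (-α) * w) := by ring
      _ = ε * w ^ β := by rw [hshift w hw0]
  have int_rpow : IntegrableOn (fun u : ℝ => ‖s‖ * ε * u ^ (-α)) (Set.Ioc w v) := by
    refine IntegrableOn.mono_set ?_ Set.Ioc_subset_Icc_self
    refine ContinuousOn.integrableOn_Icc ?_
    exact continuousOn_const.mul (continuousOn_id.rpow_const
      (fun x hx => Or.inl (ne_of_gt (hw0.trans_le hx.1))))
  have hC : ‖∫ u in Set.Ioc w v, G u‖ ≤ ‖s‖ * ε * ((v ^ β - w ^ β) / β) := by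
    calc ‖∫ u in Set.Ioc w v, G u‖ ≤ ∫ u in Set.Ioc w v, ‖G u‖ :=
          norm_integral_le_integral_norm G
      _ ≤ ∫ u in Set.Ioc w v, ‖s‖ * ε * u ^ (-α) :=
          setIntegral_mono_on intG.norm int_rpow measurableSet_Ioc hGle
      _ = ‖s‖ * ε * ∫ u in Set.Ioc w v, u ^ (-α) := integral_const_mul _ _
      _ = ‖s‖ * ε * ((v ^ β - w ^ β) / β) := by
          rw [← intervalIntegral.integral_of_le hwv.le,
            integral_rpow (Or.inl (by linarith)),
            show -α + 1 = β by rw [hβ]; ring]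
  calc ‖f v * (((theta v : ℝ) : ℂ) - (v : ℝ)) - f w * (((theta w : ℝ) : ℂ) - (w : ℝ))
        - ∫ u in Set.Ioc w v, G u‖
      ≤ ‖f v * (((theta v : ℝ) : ℂ) - (v : ℝ)) - f w * (((theta w : ℝ) : ℂ) - (w : ℝ))‖
        + ‖∫ u in Set.Ioc w v, G u‖ := norm_sub_le _ _
    _ ≤ (‖f v * (((theta v : ℝ) : ℂ) - (v : ℝ))‖ + ‖f w * (((theta w : ℝ) : ℂ) - (w : ℝ))‖)
        + ‖∫ u in Set.Ioc w v, G u‖ := add_le_add_left (norm_sub_le _ _) _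
    _ ≤ (ε * v ^ β + ε * w ^ β) + ‖s‖ * ε * ((v ^ β - w ^ β) / β) :=
        add_le_add (add_le_add hA hB) hC
    _ = ε * (v ^ β + w ^ β + ‖s‖ * (v ^ β - w ^ β) / β) := by ring
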